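/- Let ρ: [0,∞) → ℝ be C¹ and suppose there exist constants κ > 0, q > 0, k₀ ≥ 0 such that κ⁻¹(Q+k₀)^q ≤ ρ(Q) + 2Qρ'(Q) ≤ κ(Q+k₀)^q for all Q ≥ 0. Then there exists a possibly larger constant κ₅ ≥ κ such that κ₅⁻¹(Q+k₀)^q ≤ ρ(Q) ≤ κ₅(Q+k₀)^q for all Q ≥ 0, provided ρ(0) ≤ κ₅ k₀^q when k₀ > 0 (in the case k₀ = 0, assume ρ(0) = 0). -/

import Mathlib

/-- Comparison lemma: if `f 0 ≤ g 0` and for each `x > 0` there are derivatives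
`f' ≤ g'`, then `f ≤ g` on `[0, ∞)`. -/
lemma stmt5_comp (f g : ℝ → ℝ) (hfc : ContinuousOn f (Set.Ici 0))
    (hgc : ContinuousOn g (Set.Ici 0)) (h0 : f 0 ≤ g 0)
    (hd : ∀ x : ℝ, 0 < x → ∃ f' g' : ℝ, HasDerivAt f f' x ∧ HasDerivAt g g' x ∧ f' ≤ g') :
    ∀ x : ℝ, 0 ≤ x → f x ≤ g x := by
  intro x hx
  have mono : MonotoneOn (fun s => g s - f s) (Set.Ici 0) := by
    apply monotoneOn_of_deriv_nonneg (convex_Ici 0) (hgc.sub hfc)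
    · intro y hy
      rw [interior_Ici] at hy
      obtain ⟨f', g', hf, hg, _⟩ := hd y hy
      exact ((hg.sub hf).differentiableAt).differentiableWithinAt
    · intro y hy
      rw [interior_Ici] at hy
      obtain ⟨f', g', hf, hg, hle⟩ := hd y hy
      rw [(hg.sub hf).deriv]
      linarith
  have h := mono (Set.self_mem_Ici) (Set.mem_Ici.mpr hx) hx
  simp only at h
  linarith

/-- Condition (26) implies condition (27): if
`κ⁻¹(Q+k₀)^q ≤ ρ(Q) + 2Qρ'(Q) ≤ κ(Q+k₀)^q` for all `Q ≥ 0`, then (assuming `ρ(0) = 0`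
in the case `k₀ = 0`) there is a possibly larger constant `κ₅ ≥ κ` with
`κ₅⁻¹(Q+k₀)^q ≤ ρ(Q) ≤ κ₅(Q+k₀)^q` for all `Q ≥ 0`. -/
theorem stmt_5 (ρ : ℝ → ℝ) (hC1 : ContDiff ℝ 1 ρ)
    (κ q k₀ : ℝ) (hκ : 0 < κ) (hq : 0 < q) (hk₀ : 0 ≤ k₀)
    (hcond : ∀ Q : ℝ, 0 ≤ Q →
      κ⁻¹ * (Q + k₀) ^ q ≤ ρ Q + 2 * Q * deriv ρ Q ∧
      ρ Q + 2 * Q * deriv ρ Q ≤ κ * (Q + k₀) ^ q)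
    (hcav : k₀ = 0 → ρ 0 = 0) :
    ∃ κ₅ : ℝ, κ ≤ κ₅ ∧ (0 < k₀ → ρ 0 ≤ κ₅ * k₀ ^ q) ∧
      ∀ Q : ℝ, 0 ≤ Q → κ₅⁻¹ * (Q + k₀) ^ q ≤ ρ Q ∧ ρ Q ≤ κ₅ * (Q + k₀) ^ q := by
  have hρd : Differentiable ℝ ρ := hC1.differentiable one_ne_zero
  set κ₅ : ℝ := κ * (1 + 2 * q) with hκ₅def
  have hone : (1 : ℝ) ≤ 1 + 2 * q := by linarith
  have hκ₅pos : 0 < κ₅ := by positivity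
  have hκκ₅ : κ ≤ κ₅ := by nlinarith
  refine ⟨κ₅, hκκ₅, ?_, ?_⟩
  · intro hk
    have h := (hcond 0 le_rfl).2
    have hpow : (0 : ℝ) ≤ k₀ ^ q := Real.rpow_nonneg hk₀ q
    have : ρ 0 + 2 * 0 * deriv ρ 0 = ρ 0 := by ring
    rw [this] at h
    simp only [zero_add] at h
    nlinarith
  intro Q hQ
  -- the functions on the `s = √Q` side
  set f : ℝ → ℝ := fun s => s * ρ (s ^ 2) with hfdef
  set w : ℝ → ℝ := fun s => s * (s ^ 2 + k₀) ^ q with hwdef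
  -- derivative of f
  have hfderiv : ∀ s : ℝ, HasDerivAt f (ρ (s ^ 2) + 2 * s ^ 2 * deriv ρ (s ^ 2)) s := by
    intro s
    have hsq := hasDerivAt_pow 2 s
    have hρ : HasDerivAt ρ (deriv ρ (s ^ 2)) (s ^ 2) := (hρd (s ^ 2)).hasDerivAt
    have hcomp : HasDerivAt (fun y : ℝ => ρ (y ^ 2)) (deriv ρ (s ^ 2) * ((2 : ℕ) * s ^ (2 - 1))) s :=
      HasDerivAt.comp s hρ hsq
    have := (hasDerivAt_id s).mul hcomp
    refine this.congr_deriv ?_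
    simp only [id]
    push_cast
    ring
  -- derivative of w for s > 0
  have hwderiv : ∀ s : ℝ, 0 < s →
      HasDerivAt w ((s ^ 2 + k₀) ^ q + s * (2 * s * q * (s ^ 2 + k₀) ^ (q - 1))) s := by
    intro s hs
    have hbase : (0 : ℝ) < s ^ 2 + k₀ := by positivity
    have hsq : HasDerivAt (fun s : ℝ => s ^ 2 + k₀) ((2:ℕ) * s ^ (2-1)) s :=
      (hasDerivAt_pow 2 s).add_const k₀
    have hpow := hsq.rpow_const (p := q) (Or.inl (ne_of_gt hbase))
    have := (hasDerivAt_id s).mul hpow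
    refine this.congr_deriv ?_
    simp only [id]
    push_cast
    ring
  -- key rpow identity for s > 0
  have hrid : ∀ s : ℝ, 0 < s → (s ^ 2 + k₀) ^ (q - 1) * (s ^ 2 + k₀) = (s ^ 2 + k₀) ^ q := by
    intro s hs
    have hbase : (0 : ℝ) < s ^ 2 + k₀ := by positivity
    rw [← Real.rpow_add_one (ne_of_gt hbase) (q - 1)]
    norm_num
  -- continuity
  have hfc : Continuous f := continuous_id.mul (hC1.continuous.comp (continuous_pow 2))
  have hwc : Continuous w := by
    apply continuous_id.mul
    exact ((continuous_pow 2).add continuous_const).rpow_const (fun x => Or.inr hq.le)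
  -- upper bound : f ≤ κ • w on [0,∞)
  have hupper : ∀ s : ℝ, 0 ≤ s → f s ≤ κ * w s := by
    apply stmt5_comp
    · exact hfc.continuousOn
    · exact (continuous_const.mul hwc).continuousOn
    · simp [hfdef, hwdef]
    · intro s hs
      refine ⟨_, _, hfderiv s, (hwderiv s hs).const_mul κ, ?_⟩
      have hbase : (0 : ℝ) < s ^ 2 + k₀ := by positivity
      have h1 := (hcond (s ^ 2) (by positivity)).2
      have h2 : 0 ≤ s * (2 * s * q * (s ^ 2 + k₀) ^ (q - 1)) := by
        have : (0:ℝ) ≤ (s ^ 2 + k₀) ^ (q - 1) := Real.rpow_nonneg hbase.le _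
        positivity
      nlinarith
  -- lower bound : κ₅⁻¹ • w ≤ f on [0,∞)
  have hlower : ∀ s : ℝ, 0 ≤ s → κ₅⁻¹ * w s ≤ f s := by
    apply stmt5_comp
    · exact (continuous_const.mul hwc).continuousOn
    · exact hfc.continuousOn
    · simp [hfdef, hwdef]
    · intro s hs
      refine ⟨_, _, (hwderiv s hs).const_mul κ₅⁻¹, hfderiv s, ?_⟩
      have hbase : (0 : ℝ) < s ^ 2 + k₀ := by positivity
      have h1 := (hcond (s ^ 2) (by positivity)).1
      have hpq : (0:ℝ) ≤ (s ^ 2 + k₀) ^ (q - 1) := Real.rpow_nonneg hbase.le _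
      -- s * (2 s q (s²+k₀)^{q-1}) = 2 q s² (s²+k₀)^{q-1} ≤ 2 q (s²+k₀)^q
      have hkey : s * (2 * s * q * (s ^ 2 + k₀) ^ (q - 1)) ≤ 2 * q * (s ^ 2 + k₀) ^ q := by
        have hs2 : s ^ 2 ≤ s ^ 2 + k₀ := by linarith
        have heq := hrid s hs
        have h3 : s ^ 2 * (s ^ 2 + k₀) ^ (q - 1) ≤ (s ^ 2 + k₀) * (s ^ 2 + k₀) ^ (q - 1) :=
          mul_le_mul_of_nonneg_right hs2 hpq
        calc s * (2 * s * q * (s ^ 2 + k₀) ^ (q - 1))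
            = 2 * q * (s ^ 2 * (s ^ 2 + k₀) ^ (q - 1)) := by ring
          _ ≤ 2 * q * ((s ^ 2 + k₀) * (s ^ 2 + k₀) ^ (q - 1)) := by
              apply mul_le_mul_of_nonneg_left h3; linarith
          _ = 2 * q * (s ^ 2 + k₀) ^ q := by
              rw [mul_comm (s ^ 2 + k₀) ((s ^ 2 + k₀) ^ (q - 1)), heq]
      have hinv : κ₅⁻¹ * (1 + 2 * q) = κ⁻¹ := by
        rw [hκ₅def, mul_inv]
        field_simp
      have hwq : (0:ℝ) ≤ (s ^ 2 + k₀) ^ q := Real.rpow_nonneg hbase.le _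
      have hκ₅inv : (0:ℝ) < κ₅⁻¹ := by positivity
      calc κ₅⁻¹ * ((s ^ 2 + k₀) ^ q + s * (2 * s * q * (s ^ 2 + k₀) ^ (q - 1)))
          ≤ κ₅⁻¹ * ((s ^ 2 + k₀) ^ q + 2 * q * (s ^ 2 + k₀) ^ q) := by
            apply mul_le_mul_of_nonneg_left _ hκ₅inv.le
            linarith
        _ = κ₅⁻¹ * (1 + 2 * q) * (s ^ 2 + k₀) ^ q := by ring
        _ = κ⁻¹ * (s ^ 2 + k₀) ^ q := by rw [hinv]
        _ ≤ ρ (s ^ 2) + 2 * s ^ 2 * deriv ρ (s ^ 2) := h1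
  -- now translate back to Q
  rcases eq_or_lt_of_le hQ with hQ0 | hQpos
  · -- Q = 0 : use hcond directly
    subst hQ0
    have h := hcond 0 le_rfl
    have hz : ρ 0 + 2 * 0 * deriv ρ 0 = ρ 0 := by ring
    rw [hz] at h
    have hpow : (0 : ℝ) ≤ (0 + k₀) ^ q := Real.rpow_nonneg (by linarith) q
    constructor
    · calc κ₅⁻¹ * (0 + k₀) ^ q ≤ κ⁻¹ * (0 + k₀) ^ q := by
            apply mul_le_mul_of_nonneg_right _ hpow
            exact inv_anti₀ hκ hκκ₅
        _ ≤ ρ 0 := h.1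
    · calc ρ 0 ≤ κ * (0 + k₀) ^ q := h.2
        _ ≤ κ₅ * (0 + k₀) ^ q := mul_le_mul_of_nonneg_right hκκ₅ hpow
  · -- Q > 0 : take s = √Q
    set s := Real.sqrt Q with hsdef
    have hspos : 0 < s := Real.sqrt_pos.mpr hQpos
    have hs2 : s ^ 2 = Q := Real.sq_sqrt hQ
    have hup := hupper s hspos.le
    have hlo := hlower s hspos.le
    rw [hfdef, hwdef] at hup hlo
    simp only [hs2] at hup hlo
    constructor
    · have := hlo
      rw [show κ₅⁻¹ * (s * (Q + k₀) ^ q) = s * (κ₅⁻¹ * (Q + k₀) ^ q) by ring] at this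
      exact le_of_mul_le_mul_left this hspos
    · have := hup
      rw [show κ * (s * (Q + k₀) ^ q) = s * (κ * (Q + k₀) ^ q) by ring] at this
      have h1 : ρ Q ≤ κ * (Q + k₀) ^ q := le_of_mul_le_mul_left this hspos
      have hpow : (0 : ℝ) ≤ (Q + k₀) ^ q := Real.rpow_nonneg (by linarith) q
      calc ρ Q ≤ κ * (Q + k₀) ^ q := h1
        _ ≤ κ₅ * (Q + k₀) ^ q := mul_le_mul_of_nonneg_right hκκ₅ hpow
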